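/- Let g be a set map with values in a field K of characteristic zero, and let a be a K-sequence with a_0 = g_∅ and a_1 ≠ 0. Then there exists a unique K-set map h with h_∅ = 0 such that a ∘ h = g. -/

import Mathlib

open scoped Classical

noncomputable section

/-- The set of set partitions of a finite set `S`. -/
def partitions {V : Type*} [DecidableEq V] (S : Finset V) :
    Finset (Finset (Finset V)) :=
  S.powerset.powerset.filter
    (fun P => (∀ T ∈ P, T ≠ ∅) ∧ P.sup id = S ∧
      ∀ T ∈ P, ∀ U ∈ P, T ≠ U → Disjoint T U)

/-- Composition of a sequence with a set map:
`(a ∘ h)_S = ∑_{σ ⊢ S} a_{ℓ(σ)} ∏_{T ∈ σ} h_T`. -/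
def setComp {V R : Type*} [DecidableEq V] [CommRing R] (a : ℕ → R)
    (h : Finset V → R) : Finset V → R :=
  fun S => ∑ P ∈ partitions S, a P.card * ∏ T ∈ P, h T

section aux

variable {V : Type*} [DecidableEq V]

lemma mem_partitions {S : Finset V} {P : Finset (Finset V)} :
    P ∈ partitions S ↔ (∀ T ∈ P, T ⊆ S) ∧ (∀ T ∈ P, T ≠ ∅) ∧ P.sup id = S ∧
      ∀ T ∈ P, ∀ U ∈ P, T ≠ U → Disjoint T U := by
  unfold partitions
  rw [Finset.mem_filter, Finset.mem_powerset]
  constructor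
  · rintro ⟨h1, h2⟩
    exact ⟨fun T hT => Finset.mem_powerset.mp (h1 hT), h2⟩
  · rintro ⟨h1, h2⟩
    exact ⟨fun T hT => Finset.mem_powerset.mpr (h1 T hT), h2⟩

lemma partitions_empty : partitions (∅ : Finset V) = {∅} := by
  ext P
  rw [mem_partitions, Finset.mem_singleton]
  constructor
  · rintro ⟨h1, h2, -, -⟩
    by_contra hP
    obtain ⟨T, hT⟩ := Finset.nonempty_iff_ne_empty.mpr hP
    exact h2 T hT (Finset.subset_empty.mp (h1 T hT))
  · rintro rfl
    simp

lemma singleton_mem_partitions {S : Finset V} (hS : S ≠ ∅) : {S} ∈ partitions S := by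
  rw [mem_partitions]
  refine ⟨?_, ?_, ?_, ?_⟩ <;> simp [hS]

lemma mem_self_iff {S : Finset V} {P : Finset (Finset V)} (hP : P ∈ partitions S)
    (hSP : S ∈ P) : P = {S} := by
  rw [mem_partitions] at hP
  obtain ⟨h1, h2, h3, h4⟩ := hP
  ext U
  rw [Finset.mem_singleton]
  constructor
  · intro hU
    by_contra hUS
    have := h4 U hU S hSP hUS
    have : U = ∅ := Finset.subset_empty.mp
      (fun x hx => (Finset.disjoint_left.mp this hx (h1 U hU hx)).elim)
    exact h2 U hU this
  · rintro rfl; exact hSP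

lemma blocks_ssubset {S : Finset V} {P : Finset (Finset V)} (hP : P ∈ partitions S)
    (hSP : S ∉ P) {T : Finset V} (hT : T ∈ P) : T ⊂ S := by
  rw [mem_partitions] at hP
  refine ⟨hP.1 T hT, fun hc => hSP ?_⟩
  have : T = S := Finset.Subset.antisymm (hP.1 T hT) hc
  rwa [← this]

variable {K : Type*} [Field K]

lemma setComp_empty (a : ℕ → K) (h : Finset V → K) : setComp a h ∅ = a 0 := by
  simp [setComp, partitions_empty]

lemma setComp_eq (a : ℕ → K) (h : Finset V → K) {S : Finset V} (hS : S ≠ ∅) :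
    setComp a h S = a 1 * h S +
      ∑ P ∈ (partitions S).filter (fun P => S ∉ P), a P.card * ∏ T ∈ P, h T := by
  have hsplit := Finset.sum_filter_add_sum_filter_not (partitions S)
    (fun P => S ∈ P) (fun P => a P.card * ∏ T ∈ P, h T)
  have hfil : (partitions S).filter (fun P => S ∈ P) = {{S}} := by
    ext P
    rw [Finset.mem_filter, Finset.mem_singleton]
    constructor
    · rintro ⟨h1, h2⟩; exact mem_self_iff h1 h2
    · rintro rfl; exact ⟨singleton_mem_partitions hS, Finset.mem_singleton_self S⟩
  rw [setComp, ← hsplit, hfil]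
  simp

/-- The solution `h`, built by strong recursion on `S`. -/
def solve (g : Finset V → K) (a : ℕ → K) : Finset V → K :=
  fun S => Finset.strongInduction (fun S ih =>
    (g S - ∑ P ∈ (partitions S).filter (fun P => S ∉ P),
      a P.card * ∏ T ∈ P.attach,
        (if hT : (T : Finset V) ⊂ S then ih T hT else 0)) / a 1) S

lemma solve_spec (g : Finset V → K) (a : ℕ → K) (S : Finset V) :
    solve g a S = (g S - ∑ P ∈ (partitions S).filter (fun P => S ∉ P),
      a P.card * ∏ T ∈ P, solve g a T) / a 1 := by
  rw [solve, Finset.strongInduction_eq]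
  congr 2
  refine Finset.sum_congr rfl fun P hP => ?_
  rw [Finset.mem_filter] at hP
  congr 1
  rw [← Finset.prod_attach P (fun T => solve g a T)]
  refine Finset.prod_congr rfl fun T _ => ?_
  rw [dif_pos (blocks_ssubset hP.1 hP.2 T.2)]
  rfl

lemma solve_empty (g : Finset V → K) (a : ℕ → K) (ha0 : a 0 = g ∅) :
    solve g a ∅ = 0 := by
  rw [solve_spec]
  have : (partitions (∅ : Finset V)).filter (fun P => (∅:Finset V) ∉ P) = {∅} := by
    rw [partitions_empty, Finset.filter_singleton, if_pos (Finset.notMem_empty _)]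
  rw [this]
  simp [← ha0]

end aux

/-- If `a_0 = g_∅` and `a_1 ≠ 0`, there is a unique set map `h` with
`h_∅ = 0` and `a ∘ h = g`. -/
theorem exists_unique_setComp_eq {V K : Type*} [DecidableEq V] [Field K] [CharZero K]
    (g : Finset V → K) (a : ℕ → K) (ha0 : a 0 = g ∅) (ha1 : a 1 ≠ 0) :
    ∃! h : Finset V → K, h ∅ = 0 ∧ setComp a h = g := by
  refine ⟨solve g a, ⟨solve_empty g a ha0, ?_⟩, ?_⟩
  · funext S
    rcases eq_or_ne S ∅ with rfl | hS
    · rw [setComp_empty, ha0]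
    · rw [setComp_eq a _ hS]
      rw [solve_spec g a S]
      field_simp
      ring
  · rintro h ⟨h0, hcomp⟩
    funext S
    induction S using Finset.strongInduction with
    | _ S ih =>
      rcases eq_or_ne S ∅ with rfl | hS
      · rw [h0, solve_empty g a ha0]
      · have key : setComp a h S = g S := by rw [hcomp]
        rw [setComp_eq a h hS] at key
        have hrest : ∑ P ∈ (partitions S).filter (fun P => S ∉ P),
            a P.card * ∏ T ∈ P, h T
            = ∑ P ∈ (partitions S).filter (fun P => S ∉ P),
            a P.card * ∏ T ∈ P, solve g a T := by
          refine Finset.sum_congr rfl fun P hP => ?_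
          rw [Finset.mem_filter] at hP
          congr 1
          exact Finset.prod_congr rfl fun T hT => ih T (blocks_ssubset hP.1 hP.2 hT)
        rw [hrest] at key
        rw [solve_spec g a S]
        rw [eq_div_iff ha1]
        linear_combination key

end
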